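/- In ℓ², for each n ≥ 1 let A_n denote the ℂ-span of e_0 + e_n. Let (x_k) be a sequence in ℓ² converging in norm to x_∞ ∈ ℓ², and suppose that for every n there exists k ≥ n with x_k ∈ A_k. Then x_∞ = 0. -/

import Mathlib

open Filter Topology

noncomputable section

/-- The Hilbert space `ℓ²` of square-summable complex sequences. -/
abbrev ell2 : Type := lp (fun _ : ℕ => ℂ) 2

/-- The standard orthonormal basis vectors of `ℓ²`. -/
noncomputable def e (n : ℕ) : ell2 := lp.single 2 n (1 : ℂ)

/-- `A n` is the span of `e 0 + e n`. -/
noncomputable def A (n : ℕ) : Submodule ℂ ell2 := Submodule.span ℂ {e 0 + e n}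

lemma e_apply_self (n : ℕ) : (e n : ∀ _ : ℕ, ℂ) n = 1 := lp.single_apply_self 2 n 1

lemma e_apply_ne (n : ℕ) {j : ℕ} (h : j ≠ n) : (e n : ∀ _ : ℕ, ℂ) j = 0 :=
  lp.single_apply_ne 2 n 1 h

/-- If `(x k)` converges in norm to `x'` in `ℓ²` and for every `n ≥ 1` there is
`k ≥ n` with `x k ∈ A k`, then `x' = 0`. -/
theorem lim_eq_zero_of_frequently_mem_span_e0_add_en
    (x : ℕ → ell2) (x' : ell2) (hconv : Tendsto x atTop (𝓝 x'))
    (hmem : ∀ n : ℕ, 1 ≤ n → ∃ k, n ≤ k ∧ x k ∈ A k) :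
    x' = 0 := by
  have hp : (2 : ENNReal) ≠ 0 := by norm_num
  -- norm convergence
  have hnorm : Tendsto (fun k => ‖x k - x'‖) atTop (𝓝 0) := by
    exact tendsto_iff_norm_sub_tendsto_zero.1 hconv
  -- coordinates of x' tend to 0
  have hcoord : Tendsto (fun j => ‖(x' : ∀ _ : ℕ, ℂ) j‖) atTop (𝓝 0) := by
    have hs : Summable (fun j => ‖(x' : ∀ _ : ℕ, ℂ) j‖ ^ (2 : ℝ)) := by
      have := lp.memℓp x'
      rw [memℓp_gen_iff (by norm_num : 0 < (2 : ENNReal).toReal)] at this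
      simpa using this
    have h0 : Tendsto (fun j => ‖(x' : ∀ _ : ℕ, ℂ) j‖ ^ (2 : ℝ)) atTop (𝓝 0) :=
      hs.tendsto_atTop_zero
    have : Tendsto (fun j => (‖(x' : ∀ _ : ℕ, ℂ) j‖ ^ (2 : ℝ)) ^ ((2 : ℝ)⁻¹)) atTop (𝓝 0) := by
      simpa using (h0.rpow_const (p := (2 : ℝ)⁻¹) (Or.inr (by norm_num)))
    refine this.congr (fun j => ?_)
    rw [← Real.rpow_mul (norm_nonneg _)]
    norm_num
  have key : ∀ m : ℕ, (x' : ∀ _ : ℕ, ℂ) m = 0 := by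
    intro m
    rw [← norm_eq_zero]
    by_contra hne
    have hpos : 0 < ‖(x' : ∀ _ : ℕ, ℂ) m‖ := lt_of_le_of_ne (norm_nonneg _) (Ne.symm hne)
    set ε := ‖(x' : ∀ _ : ℕ, ℂ) m‖ with hε
    -- choose N for convergence and coordinate smallness
    obtain ⟨N1, hN1⟩ := (Metric.tendsto_atTop.1 hnorm) (ε / 3) (by positivity)
    obtain ⟨N2, hN2⟩ := (Metric.tendsto_atTop.1 hcoord) (ε / 3) (by positivity)
    obtain ⟨k, hk, hxk⟩ := hmem (max (max N1 N2) (m + 1)) (le_trans (Nat.le_add_left 1 m) (le_max_right _ _))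
    have hkN1 : N1 ≤ k := le_trans (le_max_left _ _) (le_trans (le_max_left _ _) hk)
    have hkN2 : N2 ≤ k := le_trans (le_max_right _ _) (le_trans (le_max_left _ _) hk)
    have hkm : m < k := lt_of_lt_of_le (Nat.lt_succ_self m) (le_trans (le_max_right _ _) hk)
    have hk1 : 1 ≤ k := le_trans (Nat.one_le_iff_ne_zero.2 (Nat.succ_ne_zero m)) hkm
    obtain ⟨c, hc⟩ := Submodule.mem_span_singleton.1 hxk
    have hdist : ‖x k - x'‖ < ε / 3 := by
      have := hN1 k hkN1
      simpa [Real.dist_eq, abs_of_nonneg (norm_nonneg (x k - x'))] using this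
    have hxkk : (x k : ∀ _ : ℕ, ℂ) k = c := by
      rw [← hc]
      have : ((c • (e 0 + e k) : ell2) : ∀ _ : ℕ, ℂ) k
          = c • ((e 0 : ∀ _ : ℕ, ℂ) k + (e k : ∀ _ : ℕ, ℂ) k) := by
        simp [lp.coeFn_smul, lp.coeFn_add, mul_add]
        rfl
      rw [this, e_apply_self, e_apply_ne 0 (by omega : k ≠ 0)]
      simp
    -- bound on |c|
    have hcbound : ‖c‖ < 2 * ε / 3 := by
      have h1 : ‖(x k : ∀ _ : ℕ, ℂ) k - (x' : ∀ _ : ℕ, ℂ) k‖ ≤ ‖x k - x'‖ := by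
        have := lp.norm_apply_le_norm hp (x k - x') k
        simpa [lp.coeFn_sub] using this
      have h2 : ‖(x' : ∀ _ : ℕ, ℂ) k‖ < ε / 3 := by
        have := hN2 k hkN2
        simpa [Real.dist_eq, abs_of_nonneg (norm_nonneg _)] using this
      calc ‖c‖ = ‖(x k : ∀ _ : ℕ, ℂ) k‖ := by rw [hxkk]
        _ ≤ ‖(x k : ∀ _ : ℕ, ℂ) k - (x' : ∀ _ : ℕ, ℂ) k‖ + ‖(x' : ∀ _ : ℕ, ℂ) k‖ := by
            simpa using norm_add_le ((x k : ∀ _ : ℕ, ℂ) k - (x' : ∀ _ : ℕ, ℂ) k) ((x' : ∀ _ : ℕ, ℂ) k)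
        _ < ε / 3 + ε / 3 := by exact add_lt_add (lt_of_le_of_lt h1 hdist) h2
        _ = 2 * ε / 3 := by ring
    -- value of x k at m
    have hxkm : ‖(x k : ∀ _ : ℕ, ℂ) m‖ ≤ ‖c‖ := by
      rw [← hc]
      rcases Nat.eq_zero_or_pos m with hm0 | hm1
      · subst hm0
        have : ((c • (e 0 + e k) : ell2) : ∀ _ : ℕ, ℂ) 0
            = c • ((e 0 : ∀ _ : ℕ, ℂ) 0 + (e k : ∀ _ : ℕ, ℂ) 0) := by
          simp [lp.coeFn_smul, lp.coeFn_add, mul_add]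
          rfl
        rw [this, e_apply_self, e_apply_ne k (by omega : (0:ℕ) ≠ k)]
        simp
      · have : ((c • (e 0 + e k) : ell2) : ∀ _ : ℕ, ℂ) m
            = c • ((e 0 : ∀ _ : ℕ, ℂ) m + (e k : ∀ _ : ℕ, ℂ) m) := by
          simp [lp.coeFn_smul, lp.coeFn_add, mul_add]
          rfl
        rw [this, e_apply_ne 0 (by omega : m ≠ 0), e_apply_ne k (by omega : m ≠ k)]
        simp [norm_nonneg]
    -- contradiction
    have h1 : ‖(x' : ∀ _ : ℕ, ℂ) m - (x k : ∀ _ : ℕ, ℂ) m‖ ≤ ‖x k - x'‖ := by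
      have := lp.norm_apply_le_norm hp (x' - x k) m
      have he : ‖x' - x k‖ = ‖x k - x'‖ := norm_sub_rev _ _
      rw [← he]
      simpa [lp.coeFn_sub] using this
    have : ε ≤ ‖(x' : ∀ _ : ℕ, ℂ) m - (x k : ∀ _ : ℕ, ℂ) m‖ + ‖(x k : ∀ _ : ℕ, ℂ) m‖ := by
      simpa using norm_add_le ((x' : ∀ _ : ℕ, ℂ) m - (x k : ∀ _ : ℕ, ℂ) m) ((x k : ∀ _ : ℕ, ℂ) m)
    have : ε < ε / 3 + 2 * ε / 3 :=
      lt_of_le_of_lt this (add_lt_add_of_lt_of_le (lt_of_le_of_lt h1 hdist) (le_trans hxkm hcbound.le))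
    linarith
  ext m
  exact key m
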